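/- For every x ∈ (0,2π) there exist y₁, y₂ with 0 < y₁ < 2π − x < y₂ < 2π such that F₋(x,y) ≤ 0 for y₁ ≤ y ≤ y₂, and there is a constant C > 0 independent of x and y such that F₋(x,y) ≥ C (y₁ − y) sin(x/2) for 0 ≤ y < y₁, and F₋(x,y) ≥ C (y − y₂) sin(x/2) for y₂ < y ≤ 2π. -/

import Mathlib

open MeasureTheory Real Set Filter
open scoped Topology ENNReal ComplexConjugate

noncomputable section

/-- The fundamental periodic cell `I = [0, 2π)`. -/
def II : Set ℝ := Set.Ico 0 (2 * π)

/-- Lebesgue measure restricted to `I`. -/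
def muI : Measure ℝ := volume.restrict II

/-- The dispersion relation `ω(x) = |sin(x/2)|`. -/
def omg (x : ℝ) : ℝ := |Real.sin (x / 2)|

/-- `Ω(x,y,z) = ω(x) + ω(y) − ω(z) − ω(x+y−z)`. -/
def Omg (x y z : ℝ) : ℝ := omg x + omg y - omg z - omg (x + y - z)

/-- The representative of `x` modulo `2π` lying in `[0, 2π)`. -/
def mod2pi (x : ℝ) : ℝ := x - 2 * π * (⌊x / (2 * π)⌋ : ℝ)

/-- `h` on the fundamental cell: `h(x,z) = (z−x)/2 + 2 arcsin( tan(|z−x|/4) cos((x+z)/4) )`. -/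
def h0 (x z : ℝ) : ℝ :=
  (z - x) / 2 + 2 * Real.arcsin (Real.tan (|z - x| / 4) * Real.cos ((x + z) / 4))

/-- The extension of `h` to all of `ℝ²`: `h(x,z) = h(x mod 2π, z mod 2π) − (x − (x mod 2π))`. -/
def hFPU (x z : ℝ) : ℝ := h0 (mod2pi x) (mod2pi z) - (x - mod2pi x)

/-- `F₊(x,y) = (cos(x/2)+cos(y/2))² + 4 sin(x/2) sin(y/2)`. -/
def Fp (x y : ℝ) : ℝ :=
  (Real.cos (x / 2) + Real.cos (y / 2)) ^ 2 + 4 * Real.sin (x / 2) * Real.sin (y / 2)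

/-- `F₋(x,y) = (cos(x/2)+cos(y/2))² − 4 sin(x/2) sin(y/2)`. -/
def Fm (x y : ℝ) : ℝ :=
  (Real.cos (x / 2) + Real.cos (y / 2)) ^ 2 - 4 * Real.sin (x / 2) * Real.sin (y / 2)

/-- The kernel `K₁(x,y) = 4·𝟙(F₋(x,y) > 0)/√(F₋(x,y))`. -/
def K1 (x y : ℝ) : ℝ := if 0 < Fm x y then 4 / Real.sqrt (Fm x y) else 0

/-- The kernel `K₂(x,y) = 2/√(F₊(x,y))`. -/
def K2 (x y : ℝ) : ℝ := 2 / Real.sqrt (Fp x y)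

/-- `V(x) = ∫_I K₂(x,y) dy`. -/
def VV (x : ℝ) : ℝ := ∫ y in II, K2 x y

/-- `W(x) = sin²(x/2)·V(x)`. -/
def WW (x : ℝ) : ℝ := Real.sin (x / 2) ^ 2 * VV x

namespace FmAux

/-- The key factor. -/
noncomputable def Pf (x y : ℝ) : ℝ :=
  2 * Real.cos ((x + y) / 4) - Real.sin (x / 2) - Real.sin (y / 2)

lemma jordan {θ : ℝ} (h0 : 0 ≤ θ) (h1 : θ ≤ π / 2) : θ / 2 ≤ Real.sin θ := by
  have h := Real.mul_le_sin h0 h1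
  have hπ0 : (0:ℝ) < π := Real.pi_pos
  have h2 : θ / 2 ≤ 2 * θ / π := by
    rw [div_le_div_iff₀ two_pos hπ0]
    nlinarith [Real.pi_le_four]
  have h3 : 2 * θ / π = 2 / π * θ := by ring
  linarith [h, h2, h3.le]

lemma fact2 (x y : ℝ) :
    Fm x y = Pf x y * (2 * Real.cos ((x + y) / 4) + Real.sin (x / 2) + Real.sin (y / 2)) := by
  have hc : Real.cos (x/2) * Real.cos (y/2) - Real.sin (x/2) * Real.sin (y/2)
      = 2 * Real.cos ((x+y)/4) ^ 2 - 1 := by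
    rw [← Real.cos_add, show x/2 + y/2 = 2*((x+y)/4) by ring, Real.cos_two_mul]
  have pa := Real.sin_sq_add_cos_sq (x/2)
  have pb := Real.sin_sq_add_cos_sq (y/2)
  unfold Fm Pf
  linear_combination pa + pb + 2 * hc

lemma mirror (x y : ℝ) :
    Pf (2*π - x) (2*π - y)
      = -(2 * Real.cos ((x + y) / 4) + Real.sin (x / 2) + Real.sin (y / 2)) := by
  unfold Pf
  rw [show (2*π - x + (2*π - y))/4 = π - (x+y)/4 by ring,
      show (2*π - x)/2 = π - x/2 by ring,
      show (2*π - y)/2 = π - y/2 by ring,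
      Real.cos_pi_sub, Real.sin_pi_sub, Real.sin_pi_sub]
  ring

lemma Fm_sym (x y : ℝ) : Fm (2*π - x) (2*π - y) = Fm x y := by
  unfold Fm
  rw [show (2*π - x)/2 = π - x/2 by ring, show (2*π - y)/2 = π - y/2 by ring,
      Real.cos_pi_sub, Real.cos_pi_sub, Real.sin_pi_sub, Real.sin_pi_sub]
  ring

lemma hP (x y : ℝ) :
    HasDerivAt (fun t => Pf x t)
      (-((Real.sin ((x + y)/4) + Real.cos (y/2))/2)) y := by
  have h1 : HasDerivAt (fun t : ℝ => (x + t)/4) (1/4) y := by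
    simpa using ((hasDerivAt_id y).const_add x).div_const 4
  have h2 : HasDerivAt (fun t : ℝ => Real.cos ((x + t)/4))
      (-Real.sin ((x + y)/4) * (1/4)) y := by
    exact (Real.hasDerivAt_cos ((x+y)/4)).comp y h1
  have h3 : HasDerivAt (fun t : ℝ => t/2) (1/2) y := by
    simpa using (hasDerivAt_id y).div_const 2
  have h4 : HasDerivAt (fun t : ℝ => Real.sin (t/2)) (Real.cos (y/2) * (1/2)) y := by
    exact (Real.hasDerivAt_sin (y/2)).comp y h3
  have h5 := ((h2.const_mul (2:ℝ)).sub_const (Real.sin (x/2))).sub h4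
  have he : -((Real.sin ((x + y)/4) + Real.cos (y/2))/2)
      = 2 * (-Real.sin ((x+y)/4) * (1/4)) - Real.cos (y/2) * (1/2) := by ring
  rw [he]
  unfold Pf
  exact h5

lemma E1 (x t : ℝ) :
    Real.sin ((x + t)/4) + Real.cos (t/2)
      = 2 * Real.sin ((3*(2*π - t) - x)/8) * Real.sin (((2*π - t) + x)/8) := by
  have h := Real.cos_sub_cos (((2*π - t) - x)/4) ((2*π - t)/2)
  rw [show ((((2*π - t) - x)/4 + (2*π - t)/2)/2) = (3*(2*π - t) - x)/8 by ring,
      show ((((2*π - t) - x)/4 - (2*π - t)/2)/2) = -(((2*π - t) + x)/8) by ring,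
      Real.sin_neg] at h
  rw [show ((2*π - t) - x)/4 = π/2 - (x+t)/4 by ring, Real.cos_pi_div_two_sub,
      show (2*π - t)/2 = π - t/2 by ring, Real.cos_pi_sub] at h
  linarith

set_option maxHeartbeats 1000000 in
lemma left_lemma {x : ℝ} (hx0 : 0 < x) (hx2 : x < 2*π) :
    ∃ y₁, 0 < y₁ ∧ y₁ < 2*π - x ∧
      (∀ y ∈ Set.Icc y₁ (2*π), Pf x y ≤ 0) ∧
      (∀ y ∈ Set.Icc (0:ℝ) y₁, 1/120 * (y₁ - y) * Real.sin (x/2) ≤ Fm x y) := by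
  have hπ : (0:ℝ) < π := Real.pi_pos
  have hsa : 0 < Real.sin (x/2) :=
    Real.sin_pos_of_pos_of_lt_pi (by linarith) (by linarith)
  have hs4 : 0 < Real.sin (x/4) :=
    Real.sin_pos_of_pos_of_lt_pi (by linarith) (by linarith)
  have hc4 : 0 < Real.cos (x/4) :=
    Real.cos_pos_of_mem_Ioo ⟨by linarith, by linarith⟩
  have hcont : Continuous fun y => Pf x y := by
    unfold Pf; fun_prop
  have hP0 : 0 < Pf x 0 := by
    have he : Pf x 0 = 2 * Real.cos (x/4) - 2 * Real.sin (x/4) * Real.cos (x/4) := by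
      unfold Pf
      rw [show (x + 0)/4 = x/4 by ring, show (0:ℝ)/2 = 0 by ring, Real.sin_zero,
          show x/2 = 2*(x/4) by ring, Real.sin_two_mul]
      ring
    have hlt1 : Real.sin (x/4) < 1 := by
      nlinarith [Real.sin_sq_add_cos_sq (x/4)]
    nlinarith
  have hP1 : Pf x (2*π - x) < 0 := by
    have he : Pf x (2*π - x) = -(2 * Real.sin (x/2)) := by
      unfold Pf
      rw [show (x + (2*π - x))/4 = π/2 by ring, Real.cos_pi_div_two,
          show (2*π - x)/2 = π - x/2 by ring, Real.sin_pi_sub]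
      ring
    linarith
  obtain ⟨y₁, hy₁mem, hy₁⟩ :=
    intermediate_value_Ioo' (show (0:ℝ) ≤ 2*π - x by linarith)
      hcont.continuousOn ⟨hP1, hP0⟩
  replace hy₁ : Pf x y₁ = 0 := hy₁
  obtain ⟨hy₁0, hy₁u⟩ := hy₁mem
  -- antitone on [0, 2π - x/3]
  have hanti : AntitoneOn (fun y => Pf x y) (Set.Icc 0 (2*π - x/3)) := by
    apply antitoneOn_of_deriv_nonpos (convex_Icc _ _) hcont.continuousOn
      (fun t _ => (hP x t).differentiableAt.differentiableWithinAt)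
    intro t ht
    rw [interior_Icc] at ht
    rw [(hP x t).deriv]
    have hA : 0 ≤ Real.sin ((3*(2*π - t) - x)/8) := by
      apply Real.sin_nonneg_of_nonneg_of_le_pi
      · nlinarith [ht.2]
      · nlinarith [ht.1]
    have hB : 0 ≤ Real.sin (((2*π - t) + x)/8) := by
      apply Real.sin_nonneg_of_nonneg_of_le_pi
      · nlinarith [ht.2]
      · nlinarith [ht.1]
    have hE := E1 x t
    nlinarith [mul_nonneg hA hB]
  have hmono : MonotoneOn (fun y => Pf x y) (Set.Icc (2*π - x/3) (2*π)) := by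
    apply monotoneOn_of_deriv_nonneg (convex_Icc _ _) hcont.continuousOn
      (fun t _ => (hP x t).differentiableAt.differentiableWithinAt)
    intro t ht
    rw [interior_Icc] at ht
    rw [(hP x t).deriv]
    have hA : Real.sin ((3*(2*π - t) - x)/8) ≤ 0 := by
      have h1 : 0 ≤ Real.sin (-((3*(2*π - t) - x)/8)) := by
        apply Real.sin_nonneg_of_nonneg_of_le_pi
        · nlinarith [ht.1]
        · nlinarith [ht.2]
      rw [Real.sin_neg] at h1; linarith
    have hB : 0 ≤ Real.sin (((2*π - t) + x)/8) := by
      apply Real.sin_nonneg_of_nonneg_of_le_pi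
      · nlinarith [ht.2]
      · nlinarith [ht.1]
    have hE := E1 x t
    nlinarith [mul_nonpos_of_nonpos_of_nonneg hA hB]
  have hPneg : ∀ y ∈ Set.Icc y₁ (2*π), Pf x y ≤ 0 := by
    intro y hy
    rcases le_or_gt y (2*π - x/3) with hcase | hcase
    · have h1 := hanti (a := y₁) (b := y)
        ⟨hy₁0.le, by linarith⟩ ⟨by linarith [hy.1], hcase⟩ hy.1
      simp only at h1
      rw [hy₁] at h1
      exact h1
    · have hle := hmono (a := y) (b := 2*π) ⟨hcase.le, hy.2⟩
        ⟨by linarith, le_refl _⟩ hy.2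
      have he : Pf x (2*π) = -(2*Real.sin (x/4)) - Real.sin (x/2) := by
        unfold Pf
        rw [show (x + 2*π)/4 = x/4 + π/2 by ring, Real.cos_add_pi_div_two,
            show (2*π)/2 = π by ring, Real.sin_pi]
        ring
      simp only at hle
      rw [he] at hle
      linarith
  set s₁ := 2*π - y₁ with hs₁def
  clear_value s₁
  have hs₁x : x < s₁ := by simp only [hs₁def]; linarith
  have hs₁2π : s₁ < 2*π := by simp only [hs₁def]; linarith
  have hs₁0 : 0 < s₁ := by linarith
  have claim2 : Real.sin (x/2) ≤ s₁^3/64 := by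
    have e1 : Real.cos ((x + y₁)/4) = Real.sin ((s₁ - x)/4) := by
      rw [show (x + y₁)/4 = π/2 - ((s₁ - x)/4) by simp only [hs₁def]; ring,
          Real.cos_pi_div_two_sub]
    have e2 : Real.sin (y₁/2) = Real.sin (s₁/2) := by
      rw [show y₁/2 = π - s₁/2 by simp only [hs₁def]; ring, Real.sin_pi_sub]
    have hrel : 2 * Real.sin ((s₁ - x)/4) = Real.sin (x/2) + Real.sin (s₁/2) := by
      have h := hy₁
      unfold Pf at h
      rw [e1, e2] at h
      linarith
    have hmono4 : Real.sin ((s₁ - x)/4) ≤ Real.sin (s₁/4) := by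
      apply Real.strictMonoOn_sin.monotoneOn
        ⟨by linarith, by linarith⟩ ⟨by linarith, by linarith⟩
      linarith
    have hhalf : Real.sin (s₁/2) = 2 * Real.sin (s₁/4) * Real.cos (s₁/4) := by
      rw [show s₁/2 = 2*(s₁/4) by ring, Real.sin_two_mul]
    have hcosid : Real.cos (s₁/4) = 1 - 2 * Real.sin (s₁/8)^2 := by
      rw [show s₁/4 = 2*(s₁/8) by ring, Real.cos_two_mul]
      nlinarith [Real.sin_sq_add_cos_sq (s₁/8)]
    have h8n : 0 ≤ Real.sin (s₁/8) :=
      Real.sin_nonneg_of_nonneg_of_le_pi (by linarith) (by linarith)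
    have h4n : 0 ≤ Real.sin (s₁/4) :=
      Real.sin_nonneg_of_nonneg_of_le_pi (by linarith) (by linarith)
    have h8le : Real.sin (s₁/8) ≤ s₁/8 := Real.sin_le (by linarith)
    have h4le : Real.sin (s₁/4) ≤ s₁/4 := Real.sin_le (by linarith)
    have hsq : Real.sin (s₁/8)^2 ≤ (s₁/8)^2 := by nlinarith
    have key : Real.sin (s₁/4) * Real.sin (s₁/8)^2 ≤ (s₁/4) * (s₁/8)^2 :=
      mul_le_mul h4le hsq (sq_nonneg _) (by linarith)
    have t1 : Real.sin (x/2) ≤ 2*Real.sin (s₁/4) - Real.sin (s₁/2) := by linarith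
    have t2 : 2*Real.sin (s₁/4) - Real.sin (s₁/2)
        = 4 * (Real.sin (s₁/4) * Real.sin (s₁/8)^2) := by
      rw [hhalf, hcosid]; ring
    have t3 : 4*((s₁/4) * (s₁/8)^2) = s₁^3/64 := by ring
    linarith
  refine ⟨y₁, hy₁0, hy₁u, hPneg, ?_⟩
  intro y hy
  obtain ⟨hy0, hyy₁⟩ := hy
  set S := 2*π - y with hSdef
  set δ := y₁ - y with hδdef
  set ym := (y + y₁)/2 with hymdef
  clear_value S δ ym
  have hδ0 : 0 ≤ δ := by simp only [hδdef]; linarith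
  have hSs₁ : s₁ ≤ S := by simp only [hSdef, hs₁def]; linarith
  have hS2π : S ≤ 2*π := by simp only [hSdef]; linarith
  have hS0 : 0 < S := by linarith
  have hymy₁ : ym ≤ y₁ := by simp only [hymdef]; linarith
  have hyym : y ≤ ym := by simp only [hymdef]; linarith
  -- slope bound on [y, ym]
  have hslope : ∀ t ∈ Set.Icc y ym,
      S^2/1024 ≤ Real.sin ((3*(2*π - t) - x)/8) * Real.sin (((2*π - t) + x)/8) := by
    intro t ht
    set s := 2*π - t with hsdef
    clear_value s
    have htym : t ≤ ym := ht.2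
    have hty : y ≤ t := ht.1
    have ht0 : 0 ≤ t := le_trans hy0 hty
    have hsS2 : S/2 ≤ s := by
      simp only [hsdef, hSdef]
      simp only [hymdef] at htym
      linarith
    have hss₁ : s₁ ≤ s := by
      simp only [hsdef, hs₁def]
      linarith [le_trans htym hymy₁]
    have hs2π : s ≤ 2*π := by simp only [hsdef]; linarith
    have hxs : x < s := lt_of_lt_of_le hs₁x hss₁
    have hs0 : 0 < s := by linarith
    have hBj : s/16 ≤ Real.sin ((s + x)/8) := by
      have := jordan (show (0:ℝ) ≤ (s+x)/8 by linarith)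
        (show (s+x)/8 ≤ π/2 by linarith)
      linarith
    have hAj : s/16 ≤ Real.sin ((3*s - x)/8) := by
      rcases le_or_gt ((3*s - x)/8) (π/2) with hca | hca
      · have := jordan (show (0:ℝ) ≤ (3*s-x)/8 by linarith) hca
        linarith
      · have heq : Real.sin ((3*s - x)/8) = Real.sin (π - (3*s - x)/8) := by
          rw [Real.sin_pi_sub]
        have hj := jordan (show (0:ℝ) ≤ π - (3*s-x)/8 by linarith)
          (show π - (3*s-x)/8 ≤ π/2 by linarith)
        have hlow : π/4 ≤ π - (3*s - x)/8 := by linarith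
        rw [heq]
        linarith
    have hprod : (s/16) * (s/16) ≤
        Real.sin ((3*s - x)/8) * Real.sin ((s + x)/8) :=
      mul_le_mul hAj hBj (by linarith) (by linarith [hAj])
    have hfin : S^2/1024 ≤ (s/16)*(s/16) := by nlinarith
    exact le_trans hfin hprod
  -- antitone of Pf + m t on [y, ym]
  have hG : Pf x ym + (S^2/1024) * (ym - y) ≤ Pf x y := by
    have hGanti : AntitoneOn (fun t => Pf x t + (S^2/1024) * t) (Set.Icc y ym) := by
      apply antitoneOn_of_deriv_nonpos (convex_Icc _ _)
        ((hcont.add (continuous_const.mul continuous_id)).continuousOn)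
      · intro t _
        exact ((hP x t).add
          ((hasDerivAt_id t).const_mul (S^2/1024))).differentiableAt.differentiableWithinAt
      · intro t ht
        rw [interior_Icc] at ht
        have hd := (hP x t).add ((hasDerivAt_id t).const_mul (S^2/1024))
        rw [HasDerivAt.deriv (f := (fun y => Pf x y) + (fun x => S ^ 2 / 1024) * id) hd]
        have hsl := hslope t ⟨ht.1.le, ht.2.le⟩
        have hE := E1 x t
        nlinarith
    have h := hGanti ⟨le_refl _, hyym⟩ ⟨hyym, le_refl _⟩ hyym
    simp only at h
    linarith
  have hPym : 0 ≤ Pf x ym := by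
    have h1 := hanti (a := ym) (b := y₁)
      ⟨by linarith, by linarith⟩ ⟨by linarith, by linarith⟩ hymy₁
    simp only at h1
    rw [hy₁] at h1
    exact h1
  have hPy : S^2/1024 * δ / 2 ≤ Pf x y := by
    have he : ym - y = δ/2 := by simp only [hymdef, hδdef]; ring
    rw [he] at hG
    linarith
  have hsy : 0 ≤ Real.sin (y/2) :=
    Real.sin_nonneg_of_nonneg_of_le_pi (by linarith) (by linarith)
  have hPynn : 0 ≤ Pf x y := le_trans (by positivity) hPy
  have hFm : 2 * (Pf x y * (Real.sin (x/2) + Real.sin (y/2))) ≤ Fm x y := by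
    have hexp : Fm x y = Pf x y^2 + 2*(Pf x y * (Real.sin (x/2) + Real.sin (y/2))) := by
      rw [fact2 x y]; unfold Pf; ring
    linarith [sq_nonneg (Pf x y)]
  rcases le_or_gt S π with hcase | hcase
  · have he : Real.sin (y/2) = Real.sin (S/2) := by
      rw [show y/2 = π - S/2 by simp only [hSdef]; ring, Real.sin_pi_sub]
    have hj : S/4 ≤ Real.sin (S/2) := by
      have := jordan (show (0:ℝ) ≤ S/2 by linarith) (by linarith)
      linarith
    have hQge : S/4 ≤ Real.sin (x/2) + Real.sin (y/2) := by rw [he]; linarith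
    have h1 : S^2/1024 * δ / 2 * (S/4) ≤ S^2/1024 * δ / 2 * (Real.sin (x/2) + Real.sin (y/2)) :=
      mul_le_mul_of_nonneg_left hQge (by positivity)
    have h2 : S^2/1024 * δ / 2 * (Real.sin (x/2) + Real.sin (y/2)) ≤
        Pf x y * (Real.sin (x/2) + Real.sin (y/2)) :=
      mul_le_mul_of_nonneg_right hPy (by linarith)
    have hcube : s₁^3 ≤ S^3 := pow_le_pow_left₀ hs₁0.le hSs₁ 3
    have hc64 : 64 * Real.sin (x/2) ≤ S^3 := by linarith
    have hprodc : 64 * (Real.sin (x/2) * δ) ≤ S^3 * δ :=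
      by nlinarith [mul_le_mul_of_nonneg_right hc64 hδ0]
    have hsaδ : 0 ≤ Real.sin (x/2) * δ := mul_nonneg hsa.le hδ0
    linarith
  · have hS3 : 3 ≤ S := by linarith [Real.pi_gt_three]
    have h1 : S^2/1024 * δ / 2 * Real.sin (x/2) ≤
        S^2/1024 * δ / 2 * (Real.sin (x/2) + Real.sin (y/2)) := by
      nlinarith [mul_nonneg (mul_nonneg (sq_nonneg S) hδ0) hsy]
    have h2 : S^2/1024 * δ / 2 * (Real.sin (x/2) + Real.sin (y/2)) ≤
        Pf x y * (Real.sin (x/2) + Real.sin (y/2)) :=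
      mul_le_mul_of_nonneg_right hPy (by linarith)
    have h9 : 9 * (δ * Real.sin (x/2)) ≤ S^2 * (δ * Real.sin (x/2)) := by
      have hS9 : (9:ℝ) ≤ S^2 := by nlinarith
      exact mul_le_mul_of_nonneg_right hS9 (mul_nonneg hδ0 hsa.le)
    have hsaδ : 0 ≤ Real.sin (x/2) * δ := mul_nonneg hsa.le hδ0
    linarith

end FmAux

/-- **Lemma 4.2.**  For every `x ∈ (0,2π)` there are `0 < y₁ < 2π−x < y₂ < 2π` with
`F₋(x,·) ≤ 0` on `[y₁,y₂]`, `F₋(x,y) ≥ C (y₁−y) sin(x/2)` for `0 ≤ y < y₁`, and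
`F₋(x,y) ≥ C (y−y₂) sin(x/2)` for `y₂ < y ≤ 2π`, with a constant `C > 0` independent of
`x` and `y`. -/
theorem Fminus_structure :
    ∃ C > (0 : ℝ), ∀ x ∈ Set.Ioo (0 : ℝ) (2 * π),
      ∃ y₁ y₂ : ℝ,
        0 < y₁ ∧ y₁ < 2 * π - x ∧ 2 * π - x < y₂ ∧ y₂ < 2 * π ∧
        (∀ y ∈ Set.Icc y₁ y₂, Fm x y ≤ 0) ∧
        (∀ y ∈ Set.Ico (0 : ℝ) y₁, C * (y₁ - y) * Real.sin (x / 2) ≤ Fm x y) ∧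
        (∀ y ∈ Set.Ioc y₂ (2 * π), C * (y - y₂) * Real.sin (x / 2) ≤ Fm x y) := by
  refine ⟨1/120, by norm_num, ?_⟩
  rintro x ⟨hx0, hx2⟩
  have hπ : (0:ℝ) < π := Real.pi_pos
  obtain ⟨y₁, hy₁0, hy₁u, hPneg, hbound⟩ := FmAux.left_lemma hx0 hx2
  have hx0' : 0 < 2*π - x := by linarith
  have hx2' : 2*π - x < 2*π := by linarith
  obtain ⟨y₁', hy₁'0, hy₁'u, hPneg', hbound'⟩ := FmAux.left_lemma hx0' hx2'
  have hy₁'x : y₁' < x := by linarith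
  refine ⟨y₁, 2*π - y₁', hy₁0, hy₁u, by linarith, by linarith, ?_, ?_, ?_⟩
  · intro y hy
    have h1 : FmAux.Pf x y ≤ 0 := hPneg y ⟨hy.1, by linarith [hy.2, hy₁'0]⟩
    have h2 : FmAux.Pf (2*π - x) (2*π - y) ≤ 0 :=
      hPneg' (2*π - y) ⟨by linarith [hy.2], by linarith [hy.1, hy₁0]⟩
    have hkey : Fm x y = -(FmAux.Pf x y * FmAux.Pf (2*π - x) (2*π - y)) := by
      rw [FmAux.fact2 x y, FmAux.mirror x y]; ring
    rw [hkey]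
    nlinarith [mul_nonneg (neg_nonneg.2 h1) (neg_nonneg.2 h2)]
  · intro y hy
    have := hbound y ⟨hy.1, hy.2.le⟩
    convert this using 2 <;> norm_num
  · intro y hy
    have h := hbound' (2*π - y) ⟨by linarith [hy.2], by linarith [hy.1]⟩
    have hsym := FmAux.Fm_sym x y
    have hsin : Real.sin ((2*π - x)/2) = Real.sin (x/2) := by
      rw [show (2*π - x)/2 = π - x/2 by ring, Real.sin_pi_sub]
    calc 1/120 * (y - (2*π - y₁')) * Real.sin (x/2)
        = 1/120 * (y₁' - (2*π - y)) * Real.sin ((2*π - x)/2) := by rw [hsin]; ring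
      _ ≤ Fm (2*π - x) (2*π - y) := h
      _ = Fm x y := hsym
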